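/- For every λ ≥ 2, G_λ(λ − 1) < 1/4, i.e. (1/π)(√(2λ−1) − (λ−1)·arccos((λ−1)/λ)) < 1/4. -/

import Mathlib

noncomputable def G (l z : ℝ) : ℝ :=
  (1 / Real.pi) * (Real.sqrt (l ^ 2 - z ^ 2) - z * Real.arccos (z / l))

theorem stmt4 (l : ℝ) (hl : 2 ≤ l) :
    G l (l - 1) < 1 / 4 := by
  have hl0 : (0:ℝ) < l := by linarith
  have hx0 : (0:ℝ) ≤ (l - 1) / l := div_nonneg (by linarith) hl0.le
  have hx1 : (l - 1) / l ≤ 1 := by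
    rw [div_le_one hl0]; linarith
  set θ := Real.arccos ((l - 1) / l) with hθdef
  have hθ0 : 0 ≤ θ := Real.arccos_nonneg _
  have hcos : Real.cos θ = (l - 1) / l := Real.cos_arccos (by linarith) hx1
  have hquad : 1 - θ ^ 2 / 2 ≤ Real.cos θ := Real.one_sub_sq_div_two_le_cos
  have hθsq : 2 / l ≤ θ ^ 2 := by
    rw [hcos] at hquad
    have h1 : 1 - (l - 1) / l = 1 / l := by field_simp; ring
    have h2 : 2 / l = 2 * (1 / l) := by ring
    linarith
  set t := Real.sqrt (2 / l) with htdef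
  set s := Real.sqrt (2 * l) with hsdef
  set r := Real.sqrt (2 * l - 1) with hrdef
  have ht0 : 0 ≤ t := Real.sqrt_nonneg _
  have hs0 : 0 ≤ s := Real.sqrt_nonneg _
  have hr0 : 0 ≤ r := Real.sqrt_nonneg _
  have ht2 : t ^ 2 = 2 / l := Real.sq_sqrt (by positivity)
  have hs2 : s ^ 2 = 2 * l := Real.sq_sqrt (by positivity)
  have hr2 : r ^ 2 = 2 * l - 1 := Real.sq_sqrt (by linarith)
  have hst : s * t = 2 := by
    rw [hsdef, htdef, ← Real.sqrt_mul (by positivity)]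
    have : (2 * l) * (2 / l) = 4 := by field_simp; ring
    rw [this]
    rw [show (4:ℝ) = 2 ^ 2 by norm_num, Real.sqrt_sq (by norm_num)]
  have hslt : s = l * t := by
    have h1 : (l * t) ^ 2 = s ^ 2 := by
      rw [hs2, mul_pow, ht2]; field_simp
    nlinarith [mul_nonneg hl0.le ht0]
  have htθ : t ≤ θ := by
    nlinarith [hθsq, ht2, hθ0, ht0]
  have hrst : r ≤ s - t / 4 := by
    have hst4 : 0 ≤ s - t / 4 := by nlinarith
    nlinarith [hr2, hs2, ht2, hst]
  have ht1 : t ≤ 1 := by nlinarith [ht2, hl0]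
  have hpi : (3:ℝ) < Real.pi := Real.pi_gt_three
  have hkey : Real.sqrt (l ^ 2 - (l - 1) ^ 2) - (l - 1) * θ < Real.pi / 4 := by
    have hrw : l ^ 2 - (l - 1) ^ 2 = 2 * l - 1 := by ring
    rw [hrw, ← hrdef]
    have hmono : (l - 1) * t ≤ (l - 1) * θ := by
      apply mul_le_mul_of_nonneg_left htθ; linarith
    rw [hslt] at hrst
    have hexp : (l - 1) * t = l * t - t := by ring
    linarith
  unfold G
  rw [div_mul_eq_mul_div, one_mul, div_lt_div_iff₀ Real.pi_pos (by norm_num : (0:ℝ) < 4)]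
  linarith [hkey, Real.pi_pos]
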